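/- Fix 0<q<1 and α>−1. For any real parameter β>−1 let p_n^{(β)} denote the monic q-Laguerre polynomials, defined by p_{−1}^{(β)}=0, p_0^{(β)}=1 and p_{n+1}^{(β)}(x) = (x − b_n^{(β)}) p_n^{(β)}(x) − d_n^{(β)} p_{n−1}^{(β)}(x) for n≥0, where b_n^{(β)} = q^{−2n−β−1}(1−q^{n+1}+q(1−q^{n+β})) and d_n^{(β)} = q^{−4n−2β+1}(1−q^n)(1−q^{n+β}). Define p̃_n^{(α)}(x) = p_n^{(α+1)}(x) + μ̃_n^{(α)} p_{n−1}^{(α+1)}(x) for n≥0. Then the sequence (p̃_n^{(α)}) satisfies the three-term recurrence p̃_{n+1}^{(α)}(x) = (x − (λ̃_n^{(α)} + μ̃_n^{(α)})) p̃_n^{(α)}(x) − λ̃_{n−1}^{(α)} μ̃_n^{(α)} p̃_{n−1}^{(α)}(x) for all n≥1, together with p̃_1^{(α)}(x) = (x − λ̃_0^{(α)}) p̃_0^{(α)}(x). -/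

import Mathlib

open Finset

/-- The finite q-Pochhammer symbol `(a;q)_n = ∏_{k=0}^{n−1} (1 − a q^k)`. -/
noncomputable def qPochN (q a : ℝ) (n : ℕ) : ℝ :=
  ∏ k ∈ Finset.range n, (1 - a * q ^ k)

/-- The infinite q-Pochhammer symbol `(a;q)_∞ = ∏_{k=0}^∞ (1 − a q^k)`. -/
noncomputable def qPochInf (q a : ℝ) : ℝ :=
  ∏' k : ℕ, (1 - a * q ^ k)

/-- `γ(u,v;q) = (q^u;q)_∞/(q^{u+v};q)_∞`. -/
noncomputable def qgamma (q u v : ℝ) : ℝ :=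
  qPochInf q (q ^ u) / qPochInf q (q ^ (u + v))

/-- `r_n^{(α)} = (1−γ(n+1,α+1;q))/(1−γ(n,α+1;q))`. -/
noncomputable def rQL (q α : ℝ) (n : ℕ) : ℝ :=
  (1 - qgamma q ((n : ℝ) + 1) (α + 1)) / (1 - qgamma q (n : ℝ) (α + 1))

/-- The birth rates `λ̃_n^{(α)} = q^{−2n−α−1}(1−q^{n+α+1})/r_n^{(α)}`. -/
noncomputable def lamQL (q α : ℝ) (n : ℕ) : ℝ :=
  q ^ (-(2 * (n : ℝ)) - α - 1) * (1 - q ^ ((n : ℝ) + α + 1)) / rQL q α n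

/-- The death rates `μ̃_n^{(α)} = q^{−2n−α}(1−q^n) r_n^{(α)}`. -/
noncomputable def muQL (q α : ℝ) (n : ℕ) : ℝ :=
  q ^ (-(2 * (n : ℝ)) - α) * (1 - q ^ (n : ℝ)) * rQL q α n

/-- `π̃_n^{(α)} = ∏_{k=0}^{n−1} λ̃_k^{(α)}/μ̃_{k+1}^{(α)}` (with `π̃_0 = 1`). -/
noncomputable def piQL (q α : ℝ) (n : ℕ) : ℝ :=
  ∏ k ∈ Finset.range n, lamQL q α k / muQL q α (k + 1)

/-- `T̃_k^{(α)} = Σ_{j=0}^{k} π̃_j^{(α)}`. -/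
noncomputable def TQL (q α : ℝ) (k : ℕ) : ℝ :=
  ∑ j ∈ Finset.range (k + 1), piQL q α j

/-- The descending q-Pochhammer symbol `(q^k;q^{−1})_ℓ = ∏_{i=0}^{ℓ−1}(1−q^{k−i})`. -/
noncomputable def qPochDesc (q : ℝ) (k ℓ : ℕ) : ℝ :=
  ∏ i ∈ Finset.range ℓ, (1 - q ^ ((k : ℝ) - (i : ℝ)))

variable {q α : ℝ}

lemma summable_log_q (hq0 : 0 < q) (hq1 : q < 1) {a : ℝ} (ha0 : 0 ≤ a) (ha1 : a < 1) :
    Summable fun k : ℕ => Real.log (1 - a * q ^ k) := by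
  have hfac : ∀ k : ℕ, a * q ^ k ≤ a := fun k =>
    mul_le_of_le_one_right ha0 (pow_le_one₀ hq0.le hq1.le)
  have hfac0 : ∀ k : ℕ, 0 ≤ a * q ^ k := fun k => mul_nonneg ha0 (pow_nonneg hq0.le k)
  have hpos : ∀ k : ℕ, 0 < 1 - a * q ^ k := fun k => by have := hfac k; linarith
  apply Summable.of_abs
  have hgeom : Summable fun k : ℕ => (a / (1 - a)) * q ^ k :=
    (summable_geometric_of_lt_one hq0.le hq1).mul_left _
  refine hgeom.of_nonneg_of_le (fun k => abs_nonneg _) (fun k => ?_)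
  have h1 : Real.log (1 - a * q ^ k) ≤ 0 :=
    Real.log_nonpos (by linarith [hpos k]) (by linarith [hfac0 k])
  rw [abs_of_nonpos h1, ← Real.log_inv]
  have h3 : Real.log (1 - a * q ^ k)⁻¹ ≤ (1 - a * q ^ k)⁻¹ - 1 :=
    Real.log_le_sub_one_of_pos (inv_pos.2 (hpos k))
  have hne := (hpos k).ne'
  have h4 : (1 - a * q ^ k)⁻¹ - 1 = (a * q ^ k) / (1 - a * q ^ k) := by
    field_simp
    ring
  have h5 : (a * q ^ k) / (1 - a * q ^ k) ≤ (a * q ^ k) / (1 - a) :=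
    div_le_div_of_nonneg_left (hfac0 k) (by linarith) (by linarith [hfac k])
  have h6 : (a * q ^ k) / (1 - a) = a / (1 - a) * q ^ k := by ring
  linarith [h3, h5, h4 ▸ h3]

lemma multipliable_qPoch (hq0 : 0 < q) (hq1 : q < 1) {a : ℝ} (ha0 : 0 ≤ a) (ha1 : a < 1) :
    Multipliable fun k : ℕ => 1 - a * q ^ k := by
  have hpos : ∀ (_ : Unit) (k : ℕ), 0 < 1 - a * q ^ k := by
    intro _ k
    have : a * q ^ k ≤ a := mul_le_of_le_one_right ha0 (pow_le_one₀ hq0.le hq1.le)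
    linarith
  exact Real.multipliable_of_summable_log (hpos ()) (summable_log_q hq0 hq1 ha0 ha1)

lemma qPochInf_pos (hq0 : 0 < q) (hq1 : q < 1) {a : ℝ} (ha0 : 0 ≤ a) (ha1 : a < 1) :
    0 < qPochInf q a := by
  have hpos : ∀ (_ : Unit) (k : ℕ), 0 < 1 - a * q ^ k := by
    intro _ k
    have : a * q ^ k ≤ a := mul_le_of_le_one_right ha0 (pow_le_one₀ hq0.le hq1.le)
    linarith
  have h : Real.exp (∑' k : ℕ, Real.log (1 - a * q ^ k)) = ∏' k : ℕ, (1 - a * q ^ k) :=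
    Real.rexp_tsum_eq_tprod (hpos ()) (summable_log_q hq0 hq1 ha0 ha1)
  rw [qPochInf, ← h]
  exact Real.exp_pos _

lemma qPochInf_shift (hq0 : 0 < q) (hq1 : q < 1) {a : ℝ} (ha0 : 0 ≤ a) (ha1 : a ≤ 1) :
    qPochInf q a = (1 - a) * qPochInf q (a * q) := by
  have haq0 : 0 ≤ a * q := mul_nonneg ha0 hq0.le
  have haq1 : a * q < 1 := lt_of_le_of_lt (mul_le_of_le_one_left hq0.le ha1) hq1
  have hm : Multipliable fun k : ℕ => 1 - a * q ^ (k + 1) :=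
    (multipliable_qPoch hq0 hq1 haq0 haq1).congr (fun k => by ring)
  have h0 : qPochInf q a = (1 - a * q ^ 0) * ∏' k : ℕ, (1 - a * q ^ (k + 1)) :=
    tprod_eq_zero_mul' hm
  rw [h0, pow_zero, mul_one, qPochInf]
  congr 1
  exact tprod_congr fun k => by ring

lemma qPochInf_mono (hq0 : 0 < q) (hq1 : q < 1) {a b : ℝ} (hb0 : 0 ≤ b) (hba : b ≤ a)
    (ha1 : a < 1) : qPochInf q a ≤ qPochInf q b := by
  have ha0 : 0 ≤ a := hb0.trans hba
  have hb1 : b < 1 := lt_of_le_of_lt hba ha1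
  refine le_of_tendsto_of_tendsto'
    ((multipliable_qPoch hq0 hq1 ha0 ha1).hasProd.tendsto_prod_nat)
    ((multipliable_qPoch hq0 hq1 hb0 hb1).hasProd.tendsto_prod_nat) (fun K => ?_)
  refine Finset.prod_le_prod (fun k _ => ?_) (fun k _ => ?_)
  · have : a * q ^ k ≤ a := mul_le_of_le_one_right ha0 (pow_le_one₀ hq0.le hq1.le)
    linarith
  · have := mul_le_mul_of_nonneg_right hba (pow_nonneg hq0.le k)
    linarith

section gamma
variable (hq0 : 0 < q) (hq1 : q < 1) (hα : -1 < α)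
include hq0 hq1 hα

lemma qPochInf_rpow_pos {u : ℝ} (hu : 0 < u) : 0 < qPochInf q (q ^ u) :=
  qPochInf_pos hq0 hq1 (Real.rpow_nonneg hq0.le u) (Real.rpow_lt_one hq0.le hq1 hu)

lemma qPochInf_rpow_shift {u : ℝ} (hu : 0 ≤ u) :
    qPochInf q (q ^ u) = (1 - q ^ u) * qPochInf q (q ^ (u + 1)) := by
  have h1 : q ^ u * q = q ^ (u + 1) := by
    rw [Real.rpow_add hq0, Real.rpow_one]
  rw [qPochInf_shift hq0 hq1 (Real.rpow_nonneg hq0.le u)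
    (Real.rpow_le_one hq0.le hq1.le hu), h1]

lemma gamma_lt_one (n : ℕ) : qgamma q (n : ℝ) (α + 1) < 1 := by
  have hn0 : (0:ℝ) ≤ (n : ℝ) := n.cast_nonneg
  set u : ℝ := (n : ℝ) with hu
  have hα1 : (0:ℝ) < α + 1 := by linarith
  have hD : 0 < qPochInf q (q ^ (u + (α + 1))) := qPochInf_rpow_pos hq0 hq1 hα (by linarith)
  rw [qgamma, div_lt_one hD]
  have e1 := qPochInf_rpow_shift hq0 hq1 hα hn0
  have e2 := qPochInf_rpow_shift hq0 hq1 hα (u := u + (α + 1)) (by linarith)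
  have hD' : 0 < qPochInf q (q ^ (u + (α + 1) + 1)) := qPochInf_rpow_pos hq0 hq1 hα (by linarith)
  have hmono : qPochInf q (q ^ (u + 1)) ≤ qPochInf q (q ^ (u + (α + 1) + 1)) :=
    qPochInf_mono hq0 hq1 (Real.rpow_nonneg hq0.le _)
      (Real.rpow_le_rpow_of_exponent_ge hq0 hq1.le (by linarith))
      (Real.rpow_lt_one hq0.le hq1 (by linarith))
  have hqlt : q ^ (u + (α + 1)) < q ^ u :=
    Real.rpow_lt_rpow_of_exponent_gt hq0 hq1 (by linarith)
  have hqle : q ^ u ≤ 1 := Real.rpow_le_one hq0.le hq1.le hn0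
  calc qPochInf q (q ^ u) = (1 - q ^ u) * qPochInf q (q ^ (u + 1)) := e1
    _ ≤ (1 - q ^ u) * qPochInf q (q ^ (u + (α + 1) + 1)) := by
        apply mul_le_mul_of_nonneg_left hmono; linarith
    _ < (1 - q ^ (u + (α + 1))) * qPochInf q (q ^ (u + (α + 1) + 1)) := by
        apply mul_lt_mul_of_pos_right _ hD'; linarith
    _ = qPochInf q (q ^ (u + (α + 1))) := e2.symm

lemma gamma_rec (n : ℕ) :
    (1 - q ^ (n : ℝ)) * qgamma q ((n : ℝ) + 1) (α + 1) =
      (1 - q ^ ((n : ℝ) + α + 1)) * qgamma q (n : ℝ) (α + 1) := by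
  set u : ℝ := (n : ℝ) with hu
  have hn0 : (0:ℝ) ≤ u := n.cast_nonneg
  have e1 := qPochInf_rpow_shift hq0 hq1 hα hn0
  have e2 := qPochInf_rpow_shift hq0 hq1 hα (u := u + (α + 1)) (by linarith)
  have hD' : 0 < qPochInf q (q ^ (u + (α + 1) + 1)) := qPochInf_rpow_pos hq0 hq1 hα (by linarith)
  have hc : (0:ℝ) < 1 - q ^ (u + (α + 1)) := by
    have := Real.rpow_lt_one hq0.le hq1 (x := q) (show 0 < u + (α+1) by linarith)
    linarith
  have hexp1 : u + 1 + (α + 1) = u + (α + 1) + 1 := by ring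
  have hexp2 : u + α + 1 = u + (α + 1) := by ring
  rw [qgamma, qgamma, hexp1, hexp2, e1, e2]
  field_simp

lemma gamma_ne (n : ℕ) : 1 - qgamma q (n : ℝ) (α + 1) ≠ 0 :=
  ne_of_gt (by linarith [gamma_lt_one hq0 hq1 hα n])

end gamma

lemma mydivmulcancel {a b r : ℝ} (hr : r ≠ 0) : a / r * (b * r) = a * b := by
  field_simp

section keys
variable (hq0 : 0 < q) (hq1 : q < 1) (hα : -1 < α)
include hq0 hq1 hα

lemma gamma_ne' (n : ℕ) : 1 - qgamma q ((n : ℝ) + 1) (α + 1) ≠ 0 := by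
  have := gamma_ne hq0 hq1 hα (n + 1)
  push_cast at this
  exact this

lemma gamma_ne'' (n : ℕ) : 1 - qgamma q ((n : ℝ) + 1 + 1) (α + 1) ≠ 0 := by
  have := gamma_ne hq0 hq1 hα (n + 2)
  push_cast at this
  rw [show (n:ℝ) + 1 + 1 = (n:ℝ) + 2 from by ring]
  exact this

lemma gamma_rec' (n : ℕ) :
    (1 - q ^ ((n : ℝ) + 1)) * qgamma q ((n : ℝ) + 1 + 1) (α + 1) =
      (1 - q ^ ((n : ℝ) + 1 + α + 1)) * qgamma q ((n : ℝ) + 1) (α + 1) := by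
  have := gamma_rec hq0 hq1 hα (n + 1)
  push_cast at this
  exact this

lemma rQL_ne (n : ℕ) : rQL q α n ≠ 0 :=
  div_ne_zero (gamma_ne' hq0 hq1 hα n) (gamma_ne hq0 hq1 hα n)

lemma key_prod (n : ℕ) :
    lamQL q α n * muQL q α n =
      q ^ (-(4 * (n : ℝ)) - 2 * α - 1) * (1 - q ^ (n : ℝ)) * (1 - q ^ ((n : ℝ) + α + 1)) := by
  have hr := rQL_ne hq0 hq1 hα n
  have hE : q ^ (-(2 * (n : ℝ)) - α - 1) * q ^ (-(2 * (n : ℝ)) - α) =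
      q ^ (-(4 * (n : ℝ)) - 2 * α - 1) := by
    rw [← Real.rpow_add hq0]
    congr 1
    ring
  rw [lamQL, muQL, mydivmulcancel hr]
  linear_combination (1 - q ^ ((n:ℝ) + α + 1)) * (1 - q ^ (n:ℝ)) * hE

lemma key_sum (n : ℕ) :
    lamQL q α n + muQL q α (n + 1) =
      q ^ (-(2 * (n : ℝ)) - α - 2) *
        (1 - q ^ ((n : ℝ) + 1) + q * (1 - q ^ ((n : ℝ) + α + 1))) := by
  have hg0 := gamma_ne hq0 hq1 hα n
  have hg1 := gamma_ne' hq0 hq1 hα n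
  have hg2 := gamma_ne'' hq0 hq1 hα n
  have rec1 := gamma_rec hq0 hq1 hα n
  have rec2 := gamma_rec' hq0 hq1 hα n
  have hE1 : q ^ (-(2 * (n : ℝ)) - α - 1) = q ^ (-(2 * (n : ℝ)) - α - 2) * q := by
    rw [show -(2 * (n : ℝ)) - α - 1 = (-(2 * (n : ℝ)) - α - 2) + 1 from by ring,
      Real.rpow_add_one hq0.ne']
  have hE2 : q ^ (-(2 * ((n : ℝ) + 1)) - α) = q ^ (-(2 * (n : ℝ)) - α - 2) := by
    rw [show -(2 * ((n : ℝ) + 1)) - α = -(2 * (n : ℝ)) - α - 2 from by ring]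
  have hQ : q ^ ((n : ℝ) + 1) = q ^ (n : ℝ) * q := Real.rpow_add_one hq0.ne' _
  have hR : q ^ ((n : ℝ) + 1 + α + 1) = q ^ ((n : ℝ) + α + 1) * q := by
    rw [show (n : ℝ) + 1 + α + 1 = ((n : ℝ) + α + 1) + 1 from by ring,
      Real.rpow_add_one hq0.ne']
  rw [lamQL, muQL, rQL, rQL]
  push_cast
  rw [hE1, hE2, div_div_eq_mul_div, mul_div_assoc', ← add_div, div_eq_iff hg1]
  set A := q ^ (-(2 * (n : ℝ)) - α - 2) with hA
  set g0 := qgamma q (n : ℝ) (α + 1)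
  set g1 := qgamma q ((n : ℝ) + 1) (α + 1)
  set g2 := qgamma q ((n : ℝ) + 1 + 1) (α + 1)
  linear_combination (A * q) * rec1 - A * rec2 - A * g1 * hQ + A * g1 * hR

end keys

/-- Theorem 6.9: the modified q-Laguerre monic polynomials
`p̃_n^{(α)} = p_n^{(α+1)} + μ̃_n^{(α)} p_{n−1}^{(α+1)}` satisfy the Birth–Death three-term
recurrence with parameters `λ̃_n^{(α)}`, `μ̃_n^{(α)}`. -/
theorem modified_qLaguerre_birth_death_recurrence
    (q α : ℝ) (hq0 : 0 < q) (hq1 : q < 1) (hα : -1 < α)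
    (bcoef dcoef : ℝ → ℕ → ℝ)
    (hb : ∀ β : ℝ, ∀ n : ℕ, bcoef β n =
      q ^ (-(2 * (n : ℝ)) - β - 1) * (1 - q ^ ((n : ℝ) + 1) + q * (1 - q ^ ((n : ℝ) + β))))
    (hd : ∀ β : ℝ, ∀ n : ℕ, dcoef β n =
      q ^ (-(4 * (n : ℝ)) - 2 * β + 1) * (1 - q ^ (n : ℝ)) * (1 - q ^ ((n : ℝ) + β)))
    (p : ℝ → ℕ → ℝ → ℝ)
    (hp0 : ∀ β x, p β 0 x = 1)
    (hp1 : ∀ β x, p β 1 x = x - bcoef β 0)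
    (hprec : ∀ β : ℝ, ∀ n : ℕ, 1 ≤ n → ∀ x,
      p β (n + 1) x = (x - bcoef β n) * p β n x - dcoef β n * p β (n - 1) x)
    (ptilde : ℕ → ℝ → ℝ)
    (hpt0 : ∀ x, ptilde 0 x = p (α + 1) 0 x)
    (hpt : ∀ n : ℕ, 1 ≤ n → ∀ x,
      ptilde n x = p (α + 1) n x + muQL q α n * p (α + 1) (n - 1) x) :
    (∀ x, ptilde 1 x = (x - lamQL q α 0) * ptilde 0 x) ∧
    (∀ n : ℕ, 1 ≤ n → ∀ x,
      ptilde (n + 1) x = (x - (lamQL q α n + muQL q α n)) * ptilde n x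
        - lamQL q α (n - 1) * muQL q α n * ptilde (n - 1) x) := by
  have sumId : ∀ k : ℕ, lamQL q α k + muQL q α (k + 1) = bcoef (α + 1) k := by
    intro k
    rw [hb (α + 1) k,
      show -(2 * (k : ℝ)) - (α + 1) - 1 = -(2 * (k : ℝ)) - α - 2 from by ring,
      show (k : ℝ) + (α + 1) = (k : ℝ) + α + 1 from by ring]
    exact key_sum hq0 hq1 hα k
  have prodId : ∀ k : ℕ, lamQL q α k * muQL q α k = dcoef (α + 1) k := by
    intro k
    rw [hd (α + 1) k,
      show -(4 * (k : ℝ)) - 2 * (α + 1) + 1 = -(4 * (k : ℝ)) - 2 * α - 1 from by ring,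
      show (k : ℝ) + (α + 1) = (k : ℝ) + α + 1 from by ring]
    exact key_prod hq0 hq1 hα k
  constructor
  · intro x
    have e := sumId 0
    norm_num at e
    rw [hpt 1 le_rfl x, hpt0 x]
    norm_num
    rw [hp0, hp1, ← e]
    ring
  · intro n hn x
    obtain ⟨m, rfl⟩ : ∃ m, n = m + 1 := ⟨n - 1, by omega⟩
    have e1 := sumId (m + 1)
    have e0 := sumId m
    have ed1 := prodId (m + 1)
    have ed0 := prodId m
    rw [hpt (m + 1 + 1) (by omega) x, hpt (m + 1) (by omega) x]
    simp only [Nat.add_sub_cancel]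
    rw [hprec (α + 1) (m + 1) (by omega) x]
    simp only [Nat.add_sub_cancel]
    rcases Nat.eq_zero_or_pos m with rfl | hm
    · rw [hpt0 x]
      norm_num at e1 e0 ed1 ⊢
      rw [hp0, hp1, ← e1, ← e0, ← ed1]
      ring
    · obtain ⟨k, rfl⟩ : ∃ k, m = k + 1 := ⟨m - 1, by omega⟩
      rw [hpt (k + 1) (by omega) x]
      simp only [Nat.add_sub_cancel]
      have hmrec := hprec (α + 1) (k + 1) (by omega) x
      simp only [Nat.add_sub_cancel] at hmrec
      rw [← e0, ← ed0] at hmrec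
      rw [← e1, ← ed1]
      linear_combination (muQL q α (k + 1 + 1)) * hmrec
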